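/- Let ε ∈ (0,1), let c : {0,1}^n → {−1,1}, and let T ⊆ [n] be such that Σ_{i ∈ [n]\T} Inf_i(c) ≤ ε/2. Suppose real numbers (α_V)_{V ⊆ T} satisfy |α_V − ĉ(V)| ≤ √(ε/2)·2^{-|T|/2} for every V ⊆ T (identifying each V ⊆ T with its indicator string in {0,1}^n). Define h(x) = Σ_{V ⊆ T} α_V·(−1)^{V·x} and let g : {0,1}^n → {−1,1} be any sign function of h (g(x)·h(x) ≥ 0 for all x). Then Pr_{x uniform in {0,1}^n}[c(x) ≠ g(x)] ≤ ε. -/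

import Mathlib

open Finset

/-- The character `χ_V(x) = (-1)^{V·x}` on the Boolean cube. -/
noncomputable def chi {n : ℕ} (V x : Fin n → ZMod 2) : ℝ :=
  (-1 : ℝ) ^ (∑ i, V i * x i).val

/-- The Fourier coefficient `f̂(S) = 2^{-n} Σ_x f(x) (-1)^{S·x}`. -/
noncomputable def fhat {n : ℕ} (f : (Fin n → ZMod 2) → ℝ)
    (S : Fin n → ZMod 2) : ℝ :=
  (2 ^ n : ℝ)⁻¹ * ∑ x : Fin n → ZMod 2, f x * chi S x

/-- The `i`-th influence `Inf_i(f) = Σ_{S : S_i = 1} f̂(S)²`. -/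
noncomputable def influence {n : ℕ} (i : Fin n) (f : (Fin n → ZMod 2) → ℝ) : ℝ :=
  ∑ S ∈ Finset.univ.filter (fun S : Fin n → ZMod 2 => S i = 1), fhat f S ^ 2

lemma zmod2_cases (a : ZMod 2) : a = 0 ∨ a = 1 := by revert a; decide

lemma neg_one_pow_val_add (a b : ZMod 2) :
    ((-1:ℝ)) ^ (a + b).val = (-1) ^ a.val * (-1) ^ b.val := by
  rcases zmod2_cases a with ha | ha <;> rcases zmod2_cases b with hb | hb <;>
    subst ha <;> subst hb <;>
    norm_num [show ZMod.val (2:ZMod 2) = 0 from rfl, show ZMod.val (1:ZMod 2) = 1 from rfl]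

lemma chi_add_left {n : ℕ} (V W x : Fin n → ZMod 2) :
    chi (V + W) x = chi V x * chi W x := by
  unfold chi
  rw [← neg_one_pow_val_add]
  congr 1
  simp [add_mul, Finset.sum_add_distrib]

lemma chi_add_right {n : ℕ} (W x y : Fin n → ZMod 2) :
    chi W (x + y) = chi W x * chi W y := by
  unfold chi
  rw [← neg_one_pow_val_add]
  congr 1
  simp [mul_add, Finset.sum_add_distrib]

lemma chi_comm {n : ℕ} (V x : Fin n → ZMod 2) : chi V x = chi x V := by
  simp [chi, mul_comm]

lemma chi_zero {n : ℕ} (x : Fin n → ZMod 2) : chi 0 x = 1 := by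
  simp [chi]

lemma card_cube (n : ℕ) : (Finset.univ : Finset (Fin n → ZMod 2)).card = 2 ^ n := by
  simp [Finset.card_univ]

lemma sum_chi {n : ℕ} (W : Fin n → ZMod 2) :
    ∑ x : Fin n → ZMod 2, chi W x = if W = 0 then (2 ^ n : ℝ) else 0 := by
  split_ifs with hW
  · subst hW
    simp [chi_zero, card_cube]
  · obtain ⟨i, hi⟩ : ∃ i, W i ≠ 0 := by
      by_contra h; push_neg at h; exact hW (funext h)
    have hWi : W i = 1 := (zmod2_cases (W i)).resolve_left hi
    set v : Fin n → ZMod 2 := Pi.single i 1 with hv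
    have hchiv : chi W v = -1 := by
      unfold chi
      have : (∑ j, W j * v j) = 1 := by
        rw [hv]
        rw [Finset.sum_eq_single i]
        · simp [hWi]
        · intro j _ hj; simp [Pi.single_apply, hj]
        · simp
      rw [this, show ZMod.val (1:ZMod 2) = 1 from rfl]; norm_num
    have key : ∀ x, chi W (x + v) = - chi W x := by
      intro x; rw [chi_add_right, hchiv]; ring
    have h1 : ∑ x : Fin n → ZMod 2, chi W (x + v) = ∑ x : Fin n → ZMod 2, chi W x :=
      Fintype.sum_equiv (Equiv.addRight v) _ _ (fun x => rfl)
    have h2 : ∑ x : Fin n → ZMod 2, chi W (x + v) = - ∑ x : Fin n → ZMod 2, chi W x := by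
      simp [key]
    linarith [h1, h2]

lemma zmod2_add_eq_zero (a b : ZMod 2) : a + b = 0 ↔ a = b := by revert a b; decide

lemma addfun_eq_zero_iff {n : ℕ} (V W : Fin n → ZMod 2) : V + W = 0 ↔ V = W := by
  constructor
  · intro h; funext i
    exact (zmod2_add_eq_zero (V i) (W i)).mp (congrFun h i)
  · intro h; subst h; funext i
    exact (zmod2_add_eq_zero (V i) (V i)).mpr rfl

lemma ortho {n : ℕ} (V W : Fin n → ZMod 2) :
    ∑ x : Fin n → ZMod 2, chi V x * chi W x = if V = W then (2 ^ n : ℝ) else 0 := by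
  have : ∀ x, chi V x * chi W x = chi (V + W) x := fun x => (chi_add_left V W x).symm
  simp only [this, sum_chi, addfun_eq_zero_iff]

lemma inversion {n : ℕ} (f : (Fin n → ZMod 2) → ℝ) (x : Fin n → ZMod 2) :
    ∑ S : Fin n → ZMod 2, fhat f S * chi S x = f x := by
  have h2 : (2 ^ n : ℝ) ≠ 0 := by positivity
  calc ∑ S : Fin n → ZMod 2, fhat f S * chi S x
      = (2 ^ n : ℝ)⁻¹ * ∑ S : Fin n → ZMod 2, ∑ y : Fin n → ZMod 2,
          f y * (chi y S * chi x S) := by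
        have key : ∀ S y : Fin n → ZMod 2, f y * (chi y S * chi x S)
            = f y * chi S y * chi S x := by
          intro S y; rw [chi_comm y S, chi_comm x S]; ring
        simp only [key]
        rw [Finset.mul_sum]
        refine Finset.sum_congr rfl fun S _ => ?_
        rw [fhat, mul_assoc, Finset.sum_mul]
    _ = (2 ^ n : ℝ)⁻¹ * ∑ y : Fin n → ZMod 2,
          f y * (if y = x then (2 ^ n : ℝ) else 0) := by
        rw [Finset.sum_comm]
        have key : ∀ y : Fin n → ZMod 2, ∑ S : Fin n → ZMod 2,
            f y * (chi y S * chi x S) = f y * (if y = x then (2 ^ n : ℝ) else 0) := by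
          intro y; rw [← Finset.mul_sum, ortho]
        simp only [key]
    _ = f x := by
        simp only [mul_ite, mul_zero, Finset.sum_ite_eq', Finset.mem_univ, if_true]
        field_simp

lemma parseval {n : ℕ} (f : (Fin n → ZMod 2) → ℝ) :
    ∑ S : Fin n → ZMod 2, fhat f S ^ 2
      = (2 ^ n : ℝ)⁻¹ * ∑ x : Fin n → ZMod 2, f x ^ 2 := by
  calc ∑ S : Fin n → ZMod 2, fhat f S ^ 2
      = ∑ S : Fin n → ZMod 2, fhat f S * ((2 ^ n : ℝ)⁻¹ *
          ∑ x : Fin n → ZMod 2, f x * chi S x) := by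
        refine Finset.sum_congr rfl fun S _ => ?_
        rw [← fhat]; ring
    _ = (2 ^ n : ℝ)⁻¹ * ∑ x : Fin n → ZMod 2,
          f x * ∑ S : Fin n → ZMod 2, fhat f S * chi S x := by
        simp only [Finset.mul_sum]
        rw [Finset.sum_comm]
        refine Finset.sum_congr rfl fun S _ => ?_
        refine Finset.sum_congr rfl fun x _ => ?_
        ring
    _ = (2 ^ n : ℝ)⁻¹ * ∑ x : Fin n → ZMod 2, f x ^ 2 := by
        have key : ∀ x : Fin n → ZMod 2,
            f x * ∑ S : Fin n → ZMod 2, fhat f S * chi S x = f x ^ 2 := by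
          intro x; rw [inversion]; ring
        simp only [key]

lemma fhat_sub {n : ℕ} (f g : (Fin n → ZMod 2) → ℝ) (S : Fin n → ZMod 2) :
    fhat (fun x => f x - g x) S = fhat f S - fhat g S := by
  simp only [fhat, sub_mul, Finset.sum_sub_distrib, mul_sub]

lemma fhat_expansion {n : ℕ} (F : Finset (Fin n → ZMod 2))
    (α : (Fin n → ZMod 2) → ℝ) (S : Fin n → ZMod 2) :
    fhat (fun x => ∑ V ∈ F, α V * chi V x) S = if S ∈ F then α S else 0 := by
  have h2 : (2 ^ n : ℝ) ≠ 0 := by positivity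
  rw [fhat]
  have : ∑ x : Fin n → ZMod 2, (∑ V ∈ F, α V * chi V x) * chi S x
      = ∑ V ∈ F, α V * (if V = S then (2 ^ n : ℝ) else 0) := by
    simp only [Finset.sum_mul]
    rw [Finset.sum_comm]
    refine Finset.sum_congr rfl fun V _ => ?_
    rw [← ortho V S, Finset.mul_sum]
    refine Finset.sum_congr rfl fun x _ => ?_
    ring
  rw [this]
  simp only [mul_ite, mul_zero]
  rw [Finset.sum_ite_eq']
  split_ifs with hSF
  · field_simp
  · simp

/-- Second phase of the junta-learning algorithm: if the influences outside
`T` sum to at most `ε/2` and the numbers `α_V` for `V ⊆ T` (identified with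
indicator strings) approximate the Fourier coefficients `ĉ(V)` to within
`√(ε/2)·2^{-|T|/2}`, then any sign function `g` of
`h(x) = Σ_{V ⊆ T} α_V (-1)^{V·x}` agrees with `c` except with probability at
most `ε` under the uniform distribution. -/
theorem stmt9 {n : ℕ} (ε : ℝ) (hε : ε ∈ Set.Ioo (0 : ℝ) 1)
    (c : (Fin n → ZMod 2) → ℝ) (hc : ∀ x, c x = 1 ∨ c x = -1)
    (T : Finset (Fin n)) (hT : ∑ i ∈ Tᶜ, influence i c ≤ ε / 2)
    (α : (Fin n → ZMod 2) → ℝ)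
    (hα : ∀ V : Fin n → ZMod 2, (∀ i, V i = 1 → i ∈ T) →
      |α V - fhat c V| ≤ Real.sqrt (ε / 2) * (Real.sqrt (2 ^ T.card))⁻¹)
    (g : (Fin n → ZMod 2) → ℝ)
    (hg : ∀ x, (g x = 1 ∨ g x = -1) ∧
      0 ≤ g x * ∑ V ∈ Finset.univ.filter
          (fun V : Fin n → ZMod 2 => ∀ i, V i = 1 → i ∈ T),
        α V * chi V x) :
    (2 ^ n : ℝ)⁻¹ *
        ((Finset.univ.filter (fun x : Fin n → ZMod 2 => c x ≠ g x)).card : ℝ) ≤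
      ε := by
  classical
  obtain ⟨hε0, hε1⟩ := hε
  set F : Finset (Fin n → ZMod 2) :=
    Finset.univ.filter (fun V : Fin n → ZMod 2 => ∀ i, V i = 1 → i ∈ T) with hF
  set h : (Fin n → ZMod 2) → ℝ := fun x => ∑ V ∈ F, α V * chi V x with hh
  set d : (Fin n → ZMod 2) → ℝ := fun x => c x - h x with hd
  set P : Finset (Fin n → ZMod 2) :=
    Finset.univ.filter (fun x : Fin n → ZMod 2 => c x ≠ g x) with hP
  have h2n : (0:ℝ) < (2 ^ n : ℝ)⁻¹ := by positivity
  -- pointwise bound on P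
  have hone : ∀ x ∈ P, (1:ℝ) ≤ d x ^ 2 := by
    intro x hx
    rw [hP, Finset.mem_filter] at hx
    have hne := hx.2
    obtain ⟨hgx, hgh⟩ := hg x
    have hcx := hc x
    have hgneg : g x = - c x := by
      rcases hcx with h1 | h1 <;> rcases hgx with h1' | h1' <;>
        simp_all
    rw [hgneg] at hgh
    have hch : c x * h x ≤ 0 := by nlinarith
    have hcsq : c x ^ 2 = 1 := by rcases hcx with h1 | h1 <;> rw [h1] <;> norm_num
    have : d x = c x - h x := rfl
    rw [this]
    nlinarith [sq_nonneg (h x)]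
  -- step 1
  have step1 : (2 ^ n : ℝ)⁻¹ * (P.card : ℝ)
      ≤ (2 ^ n : ℝ)⁻¹ * ∑ x : Fin n → ZMod 2, d x ^ 2 := by
    refine mul_le_mul_of_nonneg_left ?_ (le_of_lt h2n)
    calc (P.card : ℝ) = ∑ _x ∈ P, (1:ℝ) := by simp
      _ ≤ ∑ x ∈ P, d x ^ 2 := Finset.sum_le_sum hone
      _ ≤ ∑ x : Fin n → ZMod 2, d x ^ 2 :=
          Finset.sum_le_sum_of_subset_of_nonneg (Finset.filter_subset _ _)
            (fun x _ _ => sq_nonneg _)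
  -- Fourier coefficients of d
  have hdhat : ∀ S : Fin n → ZMod 2,
      fhat d S = fhat c S - (if S ∈ F then α S else 0) := by
    intro S
    rw [hd]
    rw [show (fun x => c x - h x) = (fun x => c x - h x) from rfl]
    rw [fhat_sub c h S, hh, fhat_expansion]
  -- step 2: Parseval
  have step2 : (2 ^ n : ℝ)⁻¹ * ∑ x : Fin n → ZMod 2, d x ^ 2
      = ∑ S : Fin n → ZMod 2, fhat d S ^ 2 := (parseval d).symm
  -- split the sum
  have step3 : ∑ S : Fin n → ZMod 2, fhat d S ^ 2
      = ∑ S ∈ F, (fhat c S - α S) ^ 2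
        + ∑ S ∈ Finset.univ.filter
            (fun S : Fin n → ZMod 2 => ¬ ∀ i, S i = 1 → i ∈ T), fhat c S ^ 2 := by
    rw [← Finset.sum_filter_add_sum_filter_not Finset.univ
      (fun S : Fin n → ZMod 2 => ∀ i, S i = 1 → i ∈ T) (fun S => fhat d S ^ 2)]
    congr 1
    · refine Finset.sum_congr rfl fun S hS => ?_
      rw [hdhat S, if_pos (by rwa [hF] at hS ⊢)]
    · refine Finset.sum_congr rfl fun S hS => ?_
      rw [Finset.mem_filter] at hS
      rw [hdhat S, if_neg (by rw [hF, Finset.mem_filter]; tauto)]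
      ring_nf
  -- card of F
  have hcardF : (F.card : ℝ) ≤ (2 : ℝ) ^ T.card := by
    have : F.card ≤ 2 ^ T.card := by
      have := Finset.card_le_card_of_injOn
        (f := fun (S : Fin n → ZMod 2) (i : T) => S i)
        (s := F) (t := (Finset.univ : Finset (T → ZMod 2)))
        (fun S _ => Finset.mem_univ _)
        (by
          intro S hS S' hS' hEq
          rw [Finset.mem_coe, hF, Finset.mem_filter] at hS hS'
          funext i
          by_cases hiT : i ∈ T
          · exact congrFun hEq ⟨i, hiT⟩
          · have h1 : S i = 0 :=
              (zmod2_cases (S i)).resolve_right (fun h => hiT (hS.2 i h))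
            have h2 : S' i = 0 :=
              (zmod2_cases (S' i)).resolve_right (fun h => hiT (hS'.2 i h))
            rw [h1, h2])
      simpa [Finset.card_univ, Fintype.card_fun, Fintype.card_coe] using this
    calc (F.card : ℝ) ≤ ((2 ^ T.card : ℕ) : ℝ) := by exact_mod_cast this
      _ = (2 : ℝ) ^ T.card := by push_cast; ring
  -- step 4a
  have step4a : ∑ S ∈ F, (fhat c S - α S) ^ 2 ≤ ε / 2 := by
    have hbound : ∀ S ∈ F, (fhat c S - α S) ^ 2 ≤ (ε / 2) * ((2:ℝ) ^ T.card)⁻¹ := by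
      intro S hS
      rw [hF, Finset.mem_filter] at hS
      have habs := hα S hS.2
      have h1 : (fhat c S - α S) ^ 2 = |α S - fhat c S| ^ 2 := by
        rw [sq_abs]; ring
      rw [h1]
      have hb : (Real.sqrt (ε / 2) * (Real.sqrt (2 ^ T.card))⁻¹) ^ 2
          = (ε / 2) * ((2:ℝ) ^ T.card)⁻¹ := by
        rw [mul_pow, ← Real.sqrt_inv, Real.sq_sqrt (by linarith), Real.sq_sqrt (by positivity)]
      rw [← hb]
      exact pow_le_pow_left₀ (abs_nonneg _) habs 2
    calc ∑ S ∈ F, (fhat c S - α S) ^ 2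
        ≤ ∑ _S ∈ F, (ε / 2) * ((2:ℝ) ^ T.card)⁻¹ := Finset.sum_le_sum hbound
      _ = (F.card : ℝ) * ((ε / 2) * ((2:ℝ) ^ T.card)⁻¹) := by
          rw [Finset.sum_const, nsmul_eq_mul]
      _ ≤ (2:ℝ) ^ T.card * ((ε / 2) * ((2:ℝ) ^ T.card)⁻¹) := by
          refine mul_le_mul_of_nonneg_right hcardF (by positivity)
      _ = ε / 2 := by field_simp
  -- step 4b
  have step4b : ∑ S ∈ Finset.univ.filter
      (fun S : Fin n → ZMod 2 => ¬ ∀ i, S i = 1 → i ∈ T), fhat c S ^ 2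
      ≤ ∑ i ∈ Tᶜ, influence i c := by
    have hpt : ∀ S ∈ Finset.univ.filter
        (fun S : Fin n → ZMod 2 => ¬ ∀ i, S i = 1 → i ∈ T),
        fhat c S ^ 2 ≤ ∑ i ∈ Tᶜ, (if S i = 1 then fhat c S ^ 2 else 0) := by
      intro S hS
      rw [Finset.mem_filter] at hS
      have := hS.2
      push_neg at this
      obtain ⟨i, hSi, hiT⟩ := this
      have hle := Finset.single_le_sum
        (f := fun j => if S j = 1 then fhat c S ^ 2 else 0)
        (fun j _ => by split_ifs <;> positivity) (Finset.mem_compl.mpr hiT)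
      simpa [hSi] using hle
    calc ∑ S ∈ Finset.univ.filter
          (fun S : Fin n → ZMod 2 => ¬ ∀ i, S i = 1 → i ∈ T), fhat c S ^ 2
        ≤ ∑ S ∈ Finset.univ.filter
            (fun S : Fin n → ZMod 2 => ¬ ∀ i, S i = 1 → i ∈ T),
            ∑ i ∈ Tᶜ, (if S i = 1 then fhat c S ^ 2 else 0) :=
          Finset.sum_le_sum hpt
      _ ≤ ∑ S : Fin n → ZMod 2, ∑ i ∈ Tᶜ, (if S i = 1 then fhat c S ^ 2 else 0) :=
          Finset.sum_le_sum_of_subset_of_nonneg (Finset.filter_subset _ _)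
            (fun S _ _ => Finset.sum_nonneg fun j _ => by split_ifs <;> positivity)
      _ = ∑ i ∈ Tᶜ, ∑ S : Fin n → ZMod 2, (if S i = 1 then fhat c S ^ 2 else 0) :=
          Finset.sum_comm
      _ = ∑ i ∈ Tᶜ, influence i c := by
          refine Finset.sum_congr rfl fun i _ => ?_
          rw [influence, Finset.sum_filter]
  -- combine
  calc (2 ^ n : ℝ)⁻¹ * (P.card : ℝ)
      ≤ (2 ^ n : ℝ)⁻¹ * ∑ x : Fin n → ZMod 2, d x ^ 2 := step1
    _ = ∑ S : Fin n → ZMod 2, fhat d S ^ 2 := step2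
    _ = ∑ S ∈ F, (fhat c S - α S) ^ 2
        + ∑ S ∈ Finset.univ.filter
            (fun S : Fin n → ZMod 2 => ¬ ∀ i, S i = 1 → i ∈ T), fhat c S ^ 2 := step3
    _ ≤ ε / 2 + ε / 2 := add_le_add step4a (le_trans step4b hT)
    _ = ε := by ring
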